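/- arXiv:2407.02993 — 4 statements merged into one kernel-verified Lean document; each statement's English description precedes it below -/
import Mathlib

section
/- Let H be a complex Hilbert space and P, Q ∈ B(H) orthogonal projections such that P - Q is compact. Then the operator Q restricted to the range of P, viewed as an operator Ran(P) → Ran(Q), is Fredholm, with parametrix given by P restricted to Ran(Q). -/
/-- If `P, Q` are orthogonal projections on a complex Hilbert space with `P - Q`
compact, then `Q : Ran(P) → Ran(Q)` is Fredholm, with parametrix `P : Ran(Q) → Ran(P)`. -/
theorem compression_fredholm_of_compact_difference
    {H : Type*} [NormedAddCommGroup H] [InnerProductSpace ℂ H] [CompleteSpace H]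
    (P Q : H →L[ℂ] H)
    (hPsa : IsSelfAdjoint P) (hPidem : P * P = P)
    (hQsa : IsSelfAdjoint Q) (hQidem : Q * Q = Q)
    (hdiff : IsCompactOperator ⇑(P - Q)) :
    ∃ (T : ↥(LinearMap.range (P : H →ₗ[ℂ] H)) →L[ℂ] ↥(LinearMap.range (Q : H →ₗ[ℂ] H)))
      (S : ↥(LinearMap.range (Q : H →ₗ[ℂ] H)) →L[ℂ] ↥(LinearMap.range (P : H →ₗ[ℂ] H))),
      (∀ x : ↥(LinearMap.range (P : H →ₗ[ℂ] H)), (T x : H) = Q x) ∧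
      (∀ y : ↥(LinearMap.range (Q : H →ₗ[ℂ] H)), (S y : H) = P y) ∧
      IsCompactOperator ⇑(S.comp T - 1) ∧
      IsCompactOperator ⇑(T.comp S - 1) := by
  -- elements of the ranges are fixed points
  have hPfix : ∀ x ∈ LinearMap.range (P : H →ₗ[ℂ] H), P x = x := by
    rintro _ ⟨y, rfl⟩
    have := congrArg (fun A : H →L[ℂ] H => A y) hPidem
    simpa using this
  have hQfix : ∀ x ∈ LinearMap.range (Q : H →ₗ[ℂ] H), Q x = x := by
    rintro _ ⟨y, rfl⟩
    have := congrArg (fun A : H →L[ℂ] H => A y) hQidem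
    simpa using this
  -- the ranges are closed
  have hPcl : IsClosed ((LinearMap.range (P : H →ₗ[ℂ] H) : Submodule ℂ H) : Set H) := by
    have : ((LinearMap.range (P : H →ₗ[ℂ] H) : Submodule ℂ H) : Set H) = {x | P x = x} := by
      ext x
      constructor
      · intro hx; exact hPfix x hx
      · intro hx; exact ⟨x, hx⟩
    rw [this]
    exact isClosed_eq P.continuous continuous_id
  have hQcl : IsClosed ((LinearMap.range (Q : H →ₗ[ℂ] H) : Submodule ℂ H) : Set H) := by
    have : ((LinearMap.range (Q : H →ₗ[ℂ] H) : Submodule ℂ H) : Set H) = {x | Q x = x} := by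
      ext x
      constructor
      · intro hx; exact hQfix x hx
      · intro hx; exact ⟨x, hx⟩
    rw [this]
    exact isClosed_eq Q.continuous continuous_id
  -- define T and S
  refine ⟨(Q.comp (LinearMap.range (P : H →ₗ[ℂ] H)).subtypeL).codRestrict (LinearMap.range (Q : H →ₗ[ℂ] H))
      (fun x => ⟨x, rfl⟩),
    (P.comp (LinearMap.range (Q : H →ₗ[ℂ] H)).subtypeL).codRestrict (LinearMap.range (P : H →ₗ[ℂ] H))
      (fun x => ⟨x, rfl⟩), fun x => rfl, fun y => rfl, ?_, ?_⟩
  · -- S ∘ T - 1 is compact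
    have hQP : IsCompactOperator ⇑(Q - P) := by
      have := hdiff.neg
      have h : (-⇑(P - Q)) = ⇑(Q - P) := by
        ext x; simp
      rwa [h] at this
    have hcomp : IsCompactOperator ⇑(P.comp (Q - P)) :=
      hQP.continuous_comp P.continuous
    have hcomp2 : IsCompactOperator
        (⇑(P.comp (Q - P)) ∘ ⇑(LinearMap.range (P : H →ₗ[ℂ] H)).subtypeL) :=
      hcomp.comp_clm (LinearMap.range (P : H →ₗ[ℂ] H)).subtypeL
    have hcod := hcomp2.codRestrict (V := LinearMap.range (P : H →ₗ[ℂ] H))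
      (fun x => ⟨(Q - P) x, rfl⟩) hPcl
    have heq : ⇑(((P.comp (LinearMap.range (Q : H →ₗ[ℂ] H)).subtypeL).codRestrict (LinearMap.range (P : H →ₗ[ℂ] H))
          (fun x => ⟨x, rfl⟩)).comp
        ((Q.comp (LinearMap.range (P : H →ₗ[ℂ] H)).subtypeL).codRestrict (LinearMap.range (Q : H →ₗ[ℂ] H))
          (fun x => ⟨x, rfl⟩)) - 1)
        = Set.codRestrict (⇑(P.comp (Q - P)) ∘ ⇑(LinearMap.range (P : H →ₗ[ℂ] H)).subtypeL)
            (LinearMap.range (P : H →ₗ[ℂ] H)) (fun x => ⟨(Q - P) x, rfl⟩) := by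
      funext x
      apply Subtype.ext
      have hx : P (x : H) = (x : H) := hPfix _ x.2
      simp [Set.codRestrict, Submodule.coe_sub, map_sub, hx]
      rfl
    rwa [heq]
  · -- T ∘ S - 1 is compact
    have hcomp : IsCompactOperator ⇑(Q.comp (P - Q)) :=
      hdiff.continuous_comp Q.continuous
    have hcomp2 : IsCompactOperator
        (⇑(Q.comp (P - Q)) ∘ ⇑(LinearMap.range (Q : H →ₗ[ℂ] H)).subtypeL) :=
      hcomp.comp_clm (LinearMap.range (Q : H →ₗ[ℂ] H)).subtypeL
    have hcod := hcomp2.codRestrict (V := LinearMap.range (Q : H →ₗ[ℂ] H))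
      (fun x => ⟨(P - Q) x, rfl⟩) hQcl
    have heq : ⇑(((Q.comp (LinearMap.range (P : H →ₗ[ℂ] H)).subtypeL).codRestrict (LinearMap.range (Q : H →ₗ[ℂ] H))
          (fun x => ⟨x, rfl⟩)).comp
        ((P.comp (LinearMap.range (Q : H →ₗ[ℂ] H)).subtypeL).codRestrict (LinearMap.range (P : H →ₗ[ℂ] H))
          (fun x => ⟨x, rfl⟩)) - 1)
        = Set.codRestrict (⇑(Q.comp (P - Q)) ∘ ⇑(LinearMap.range (Q : H →ₗ[ℂ] H)).subtypeL)
            (LinearMap.range (Q : H →ₗ[ℂ] H)) (fun x => ⟨(P - Q) x, rfl⟩) := by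
      funext y
      apply Subtype.ext
      have hy : Q (y : H) = (y : H) := hQfix _ y.2
      simp [Set.codRestrict, Submodule.coe_sub, map_sub, hy]
      rfl
    rwa [heq]
end

section
/- Let H be a complex Hilbert space, P ∈ B(H) an orthogonal projection, and U ∈ B(H) a unitary such that the commutator [P, U] = PU - UP is compact. Then P - U*PU is compact, the operator PUP : Ran(P) → Ran(P) is Fredholm with parametrix PU*P, and the relative index of the pair (P, U*PU) equals the Fredholm index of PUP : Ran(P) → Ran(P), i.e. relind(P, U*PU) = Index(PUP). -/
open Module in
/-- The Fredholm index of a linear map: `dim ker − dim coker` (as natural numbers cast to `ℤ`;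
meaningful when the map is Fredholm). -/
noncomputable def fredIndex {E F : Type*} [AddCommGroup E] [AddCommGroup F]
    [Module ℂ E] [Module ℂ F] (T : E →ₗ[ℂ] F) : ℤ :=
  (finrank ℂ (LinearMap.ker T) : ℤ) - (finrank ℂ (F ⧸ LinearMap.range T) : ℤ)

/-- The operator `Q : Ran(P) → Ran(Q)` obtained by restricting `Q`. -/
noncomputable def compress {H : Type*} [NormedAddCommGroup H] [InnerProductSpace ℂ H]
    (P Q : H →L[ℂ] H) : ↥(LinearMap.range (P : H →ₗ[ℂ] H)) →ₗ[ℂ] ↥(LinearMap.range (Q : H →ₗ[ℂ] H)) :=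
  LinearMap.codRestrict (LinearMap.range (Q : H →ₗ[ℂ] H))
    ((Q : H →ₗ[ℂ] H).comp (LinearMap.range (P : H →ₗ[ℂ] H)).subtype)
    (fun c => LinearMap.mem_range.mpr ⟨c, rfl⟩)

/-- The relative index of a pair of projections `(P, Q)` with compact difference:
the Fredholm index of `Q : Ran(P) → Ran(Q)`. -/
noncomputable def relind {H : Type*} [NormedAddCommGroup H] [InnerProductSpace ℂ H]
    (P Q : H →L[ℂ] H) : ℤ :=
  fredIndex (compress P Q)

/-- The compression `P U P : Ran(P) → Ran(P)`, `x ↦ P (U x)`. -/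
noncomputable def compressEndo {H : Type*} [NormedAddCommGroup H] [InnerProductSpace ℂ H]
    (P U : H →L[ℂ] H) : ↥(LinearMap.range (P : H →ₗ[ℂ] H)) →ₗ[ℂ] ↥(LinearMap.range (P : H →ₗ[ℂ] H)) :=
  LinearMap.codRestrict (LinearMap.range (P : H →ₗ[ℂ] H))
    (((P : H →ₗ[ℂ] H).comp (U : H →ₗ[ℂ] H)).comp (LinearMap.range (P : H →ₗ[ℂ] H)).subtype)
    (fun c => LinearMap.mem_range.mpr ⟨U c, rfl⟩)

/-- `fredIndex` is invariant under postcomposition with a linear equivalence. -/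
lemma fredIndex_equiv_comp {E F G : Type*} [AddCommGroup E] [AddCommGroup F] [AddCommGroup G]
    [Module ℂ E] [Module ℂ F] [Module ℂ G] (T : E →ₗ[ℂ] F) (e : F ≃ₗ[ℂ] G) :
    fredIndex ((e : F →ₗ[ℂ] G) ∘ₗ T) = fredIndex T := by
  unfold fredIndex
  have hker : LinearMap.ker ((e : F →ₗ[ℂ] G) ∘ₗ T) = LinearMap.ker T := by
    rw [LinearMap.ker_comp, LinearEquiv.ker, Submodule.comap_bot]
  have hrange : Submodule.map (e : F →ₗ[ℂ] G) (LinearMap.range T)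
      = LinearMap.range ((e : F →ₗ[ℂ] G) ∘ₗ T) := (LinearMap.range_comp _ _).symm
  have hq : (F ⧸ LinearMap.range T) ≃ₗ[ℂ] (G ⧸ LinearMap.range ((e : F →ₗ[ℂ] G) ∘ₗ T)) :=
    Submodule.Quotient.equiv _ _ e hrange
  rw [hker, hq.finrank_eq]

/-- Compactness of a linear map between submodules that is realized by a compact operator
on the ambient space. -/
lemma isCompactOperator_of_codRestrict
    {H : Type*} [NormedAddCommGroup H] [InnerProductSpace ℂ H]
    {p q : Submodule ℂ H} (hq : IsClosed (q : Set H))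
    (T : H →L[ℂ] H) (hT : IsCompactOperator ⇑T)
    (f : ↥p →ₗ[ℂ] ↥q) (hf : ∀ x : ↥p, (f x : H) = T x) :
    IsCompactOperator ⇑f := by
  have h1 : IsCompactOperator (⇑T ∘ ⇑p.subtypeL) := hT.comp_clm p.subtypeL
  have hmem : ∀ x : ↥p, (⇑T ∘ ⇑p.subtypeL) x ∈ q := fun x => by
    have h := (f x).2
    rw [hf x] at h
    exact h
  have h2 : IsCompactOperator (Set.codRestrict (⇑T ∘ ⇑p.subtypeL) q hmem) :=
    h1.codRestrict hmem hq
  have : ⇑f = Set.codRestrict (⇑T ∘ ⇑p.subtypeL) q hmem := by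
    funext x
    exact Subtype.ext (hf x)
  rw [this]
  exact h2

/-- For an orthogonal projection `P` and a unitary `U` with `[P, U]` compact:
`P - U*PU` is compact, `PUP : Ran(P) → Ran(P)` is Fredholm with parametrix `PU*P`, and
`relind(P, U*PU) = Index(PUP : Ran(P) → Ran(P))`. -/
theorem relind_proj_conj_unitary
    {H : Type*} [NormedAddCommGroup H] [InnerProductSpace ℂ H] [CompleteSpace H]
    (P U : H →L[ℂ] H)
    (hPsa : IsSelfAdjoint P) (hPidem : P * P = P)
    (hU₁ : star U * U = 1) (hU₂ : U * star U = 1)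
    (hcomm : IsCompactOperator ⇑(P * U - U * P)) :
    IsCompactOperator ⇑(P - star U * P * U) ∧
    IsCompactOperator ⇑(compressEndo P (star U) ∘ₗ compressEndo P U - LinearMap.id :
      ↥(LinearMap.range (P : H →ₗ[ℂ] H)) →ₗ[ℂ] ↥(LinearMap.range (P : H →ₗ[ℂ] H))) ∧
    IsCompactOperator ⇑(compressEndo P U ∘ₗ compressEndo P (star U) - LinearMap.id :
      ↥(LinearMap.range (P : H →ₗ[ℂ] H)) →ₗ[ℂ] ↥(LinearMap.range (P : H →ₗ[ℂ] H))) ∧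
    relind P (star U * P * U) = fredIndex (compressEndo P U) := by
  -- pointwise facts
  have hPx : ∀ x : H, x ∈ LinearMap.range (P : H →ₗ[ℂ] H) → P x = x := by
    rintro x ⟨y, rfl⟩
    have := congrFun (congrArg (⇑) hPidem) y
    simpa [ContinuousLinearMap.mul_apply] using this
  have hsUU : ∀ x : H, star U (U x) = x := fun x => by
    have := congrFun (congrArg (⇑) hU₁) x
    simpa [ContinuousLinearMap.mul_apply] using this
  have hUsU : ∀ x : H, U (star U x) = x := fun x => by
    have := congrFun (congrArg (⇑) hU₂) x
    simpa [ContinuousLinearMap.mul_apply] using this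
  -- closedness of the range of P
  have hclosed : IsClosed ((LinearMap.range (P : H →ₗ[ℂ] H) : Submodule ℂ H) : Set H) := by
    have : ((LinearMap.range (P : H →ₗ[ℂ] H) : Submodule ℂ H) : Set H) = {x : H | P x = x} := by
      ext x
      constructor
      · exact fun hx => hPx x hx
      · exact fun hx => ⟨x, hx⟩
    rw [this]
    exact isClosed_eq P.continuous continuous_id
  -- compactness of D = PU - UP and its variants
  have hD : IsCompactOperator ⇑(P * U - U * P) := hcomm
  refine ⟨?_, ?_, ?_, ?_⟩
  · -- P - U*PU = (star U) ∘ (UP - PU)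
    have key : P - star U * P * U = star U * (U * P - P * U) := by
      rw [mul_sub, ← mul_assoc, hU₁, one_mul, mul_assoc]
    rw [key]
    have : ⇑(star U * (U * P - P * U)) = ⇑(star U) ∘ ⇑(U * P - P * U) := by
      funext x; simp [ContinuousLinearMap.mul_apply]
    rw [this]
    have hD' : IsCompactOperator ⇑(U * P - P * U) := by
      have h : (U * P - P * U) = -(P * U - U * P) := (neg_sub _ _).symm
      rw [h]
      simpa using hD.neg
    exact hD'.clm_comp (star U)
  · -- (P (star U) P) (P U P) - 1 compact on Ran P
    refine isCompactOperator_of_codRestrict hclosed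
      ((P * star U) * (P * U - U * P)) (hD.clm_comp (P * star U)) _ ?_
    rintro ⟨x, hx⟩
    have hPxx : P x = x := hPx x hx
    simp only [LinearMap.sub_apply, LinearMap.comp_apply, LinearMap.id_apply,
      Submodule.coe_sub, compressEndo, LinearMap.codRestrict_apply,
      Submodule.subtype_apply, ContinuousLinearMap.coe_coe,
      ContinuousLinearMap.mul_apply, ContinuousLinearMap.sub_apply, map_sub]
    rw [hsUU, hPxx, hPxx]
  · -- (P U P) (P (star U) P) - 1 compact on Ran P
    have hD' : IsCompactOperator ⇑(U * P - P * U) := by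
      have h : (U * P - P * U) = -(P * U - U * P) := (neg_sub _ _).symm
      rw [h]
      simpa using hD.neg
    have hT : IsCompactOperator ⇑(P * ((U * P - P * U) * star U)) := by
      have : ⇑(P * ((U * P - P * U) * star U))
          = ⇑(P * (U * P - P * U)) ∘ ⇑(star U) := by
        funext x; simp [ContinuousLinearMap.mul_apply]
      rw [this]
      exact (hD'.clm_comp P).comp_clm (star U)
    refine isCompactOperator_of_codRestrict hclosed
      (P * ((U * P - P * U) * star U)) hT _ ?_
    rintro ⟨x, hx⟩
    have hPxx : P x = x := hPx x hx
    simp only [LinearMap.sub_apply, LinearMap.comp_apply, LinearMap.id_apply,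
      Submodule.coe_sub, compressEndo, LinearMap.codRestrict_apply,
      Submodule.subtype_apply, ContinuousLinearMap.coe_coe,
      ContinuousLinearMap.mul_apply, ContinuousLinearMap.sub_apply, map_sub]
    simp only [hUsU, hPxx]
  · -- the index identity
    set Q : H →L[ℂ] H := star U * P * U with hQ
    -- the equivalence Ran Q ≃ Ran P given by U
    have memP : ∀ y : H, y ∈ LinearMap.range (Q : H →ₗ[ℂ] H) → U y ∈ LinearMap.range (P : H →ₗ[ℂ] H) := by
      rintro y ⟨c, rfl⟩
      refine ⟨U c, ?_⟩
      simp [hQ, ContinuousLinearMap.mul_apply, hUsU]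
    have memQ : ∀ x : H, x ∈ LinearMap.range (P : H →ₗ[ℂ] H) → star U x ∈ LinearMap.range (Q : H →ₗ[ℂ] H) := by
      rintro x ⟨c, rfl⟩
      refine ⟨star U (P c), ?_⟩
      simp [hQ, ContinuousLinearMap.mul_apply, hUsU, hPx (P c) ⟨c, rfl⟩]
    let f : ↥(LinearMap.range (Q : H →ₗ[ℂ] H)) →ₗ[ℂ] ↥(LinearMap.range (P : H →ₗ[ℂ] H)) :=
      LinearMap.codRestrict (LinearMap.range (P : H →ₗ[ℂ] H))
        ((U : H →ₗ[ℂ] H).comp (LinearMap.range (Q : H →ₗ[ℂ] H)).subtype)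
        (fun c => memP c c.2)
    let g : ↥(LinearMap.range (P : H →ₗ[ℂ] H)) →ₗ[ℂ] ↥(LinearMap.range (Q : H →ₗ[ℂ] H)) :=
      LinearMap.codRestrict (LinearMap.range (Q : H →ₗ[ℂ] H))
        (((star U : H →L[ℂ] H) : H →ₗ[ℂ] H).comp (LinearMap.range (P : H →ₗ[ℂ] H)).subtype)
        (fun c => memQ c c.2)
    have hgf : g ∘ₗ f = LinearMap.id := by
      ext y
      simp only [LinearMap.comp_apply, LinearMap.id_apply, g, f,
        LinearMap.codRestrict_apply, Submodule.subtype_apply,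
        ContinuousLinearMap.coe_coe]
      exact hsUU _
    have hfg : f ∘ₗ g = LinearMap.id := by
      ext x
      simp only [LinearMap.comp_apply, LinearMap.id_apply, g, f,
        LinearMap.codRestrict_apply, Submodule.subtype_apply,
        ContinuousLinearMap.coe_coe]
      exact hUsU _
    let e : ↥(LinearMap.range (Q : H →ₗ[ℂ] H)) ≃ₗ[ℂ] ↥(LinearMap.range (P : H →ₗ[ℂ] H)) :=
      LinearEquiv.ofLinear f g hfg hgf
    have hkey : compressEndo P U = (e : ↥(LinearMap.range (Q : H →ₗ[ℂ] H)) →ₗ[ℂ] ↥(LinearMap.range (P : H →ₗ[ℂ] H))) ∘ₗ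
        compress P Q := by
      ext x
      simp only [LinearMap.comp_apply, compressEndo, compress, e,
        LinearEquiv.ofLinear_apply, f, LinearMap.codRestrict_apply,
        Submodule.subtype_apply, ContinuousLinearMap.coe_coe, LinearEquiv.coe_coe]
      change P (U (x : H)) = U ((star U * P * U : H →L[ℂ] H) (x : H))
      simp [ContinuousLinearMap.mul_apply, hUsU]
    rw [relind, hkey, fredIndex_equiv_comp]
end

section
/- The even continuous functions vanishing at infinity on ℝ form the C*-subalgebra of C₀(ℝ) generated by the single function t ↦ (1 + t²)⁻¹; i.e., the closed *-subalgebra of C₀(ℝ,ℂ) generated by t ↦ 1/(1+t²) equals {f ∈ C₀(ℝ,ℂ) : f(-t) = f(t) for all t}. -/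
open ZeroAtInfty Filter Topology
open scoped ContinuousMapZero

noncomputable section Stmt11Aux

namespace Stmt11

/-- The segment `[0,1]` inside `ℂ`. -/
def S : Set ℂ := Complex.ofReal '' Set.Icc 0 1

instance : Zero S := ⟨⟨0, ⟨0, by simp⟩⟩⟩

lemma hz : ((0 : S) : ℂ) = 0 := rfl

instance : Fact ((0 : ℂ) ∈ S) := ⟨⟨0, by simp⟩⟩

instance : CompactSpace S :=
  isCompact_iff_compactSpace.mp (isCompact_Icc.image Complex.continuous_ofReal)

def h (t : ℝ) : ℝ := (1 + t ^ 2)⁻¹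

lemma h_pos (t : ℝ) : 0 < h t := by unfold h; positivity

lemma h_le_one (t : ℝ) : h t ≤ 1 := by
  rw [h]
  rw [inv_le_one_iff₀]
  right; nlinarith [sq_nonneg t]

lemma h_mem (t : ℝ) : ((h t : ℝ) : ℂ) ∈ S := ⟨h t, ⟨(h_pos t).le, h_le_one t⟩, rfl⟩

lemma h_cont : Continuous h := by
  apply Continuous.inv₀ (by continuity)
  intro t; positivity

/-- The map `ℝ → S`, `t ↦ (1+t²)⁻¹`. -/
def H : C(ℝ, S) :=
  ⟨fun t => ⟨((h t : ℝ) : ℂ), h_mem t⟩,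
    Continuous.subtype_mk (Complex.continuous_ofReal.comp h_cont) _⟩

lemma H_tendsto : Tendsto (fun t => H t) (cocompact ℝ) (𝓝 (0 : S)) := by
  rw [tendsto_subtype_rng]
  have h2 : Tendsto (fun t : ℝ => t ^ 2) (cocompact ℝ) atTop := by
    have := (tendsto_pow_atTop (two_ne_zero)).comp (tendsto_norm_cocompact_atTop (E := ℝ))
    convert this using 1
    funext t
    simp [Function.comp, sq_abs]
  have h1 : Tendsto (fun t : ℝ => 1 + t ^ 2) (cocompact ℝ) atTop :=
    tendsto_atTop_add_const_left _ 1 h2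
  have hh : Tendsto h (cocompact ℝ) (𝓝 0) := tendsto_inv_atTop_zero.comp h1
  have := (Complex.continuous_ofReal.tendsto 0).comp hh
  rw [hz, ← Complex.ofReal_zero]
  exact this

/-- Precomposition with `H` as a non-unital star algebra homomorphism
from `C(S, ℂ)₀` to `C₀(ℝ, ℂ)`. -/
def Φ : C(S, ℂ)₀ →⋆ₙₐ[ℂ] C₀(ℝ, ℂ) where
  toFun f :=
    { toFun := fun t => f (H t)
      continuous_toFun := (map_continuous f).comp H.continuous
      zero_at_infty' := by
        have := ((map_continuous f).tendsto (0 : S)).comp H_tendsto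
        rw [← map_zero f]
        exact this }
  map_zero' := by ext t; simp
  map_add' f₁ f₂ := by ext t; simp
  map_mul' f₁ f₂ := by ext t; simp
  map_star' f := by ext t; simp
  map_smul' c f := by ext t; simp

lemma Φ_apply (f : C(S, ℂ)₀) (t : ℝ) : Φ f t = f (H t) := rfl

lemma Φ_cont : Continuous (Φ : C(S, ℂ)₀ → C₀(ℝ, ℂ)) := by
  refine AddMonoidHomClass.continuous_of_bound Φ 1 fun f => ?_
  rw [one_mul, ← ZeroAtInftyContinuousMap.norm_toBCF_eq_norm]
  refine (BoundedContinuousFunction.norm_le (norm_nonneg f)).mpr fun t => ?_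
  calc ‖f (H t)‖ ≤ ‖(f : C(S, ℂ))‖ := ContinuousMap.norm_coe_le_norm _ _
    _ = ‖f‖ := rfl

lemma ev_cont (t : ℝ) : Continuous fun f : C₀(ℝ, ℂ) => f t := by
  have : (fun f : C₀(ℝ, ℂ) => f t) =
      (fun F : BoundedContinuousFunction ℝ ℂ => F t) ∘ ZeroAtInftyContinuousMap.toBCF := rfl
  rw [this]
  exact (continuous_eval_const t).comp
    (ZeroAtInftyContinuousMap.isometry_toBCF (α := ℝ) (β := ℂ)).continuous

/-- The even functions as a non-unital star subalgebra of `C₀(ℝ, ℂ)`. -/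
def E : NonUnitalStarSubalgebra ℂ C₀(ℝ, ℂ) where
  carrier := {f : C₀(ℝ, ℂ) | ∀ t : ℝ, f (-t) = f t}
  add_mem' := by intro f₁ f₂ hf₁ hf₂ t; simp [hf₁ t, hf₂ t]
  mul_mem' := by intro f₁ f₂ hf₁ hf₂ t; simp [hf₁ t, hf₂ t]
  zero_mem' := by intro t; simp
  smul_mem' := by intro c f hf t; simp [hf t]
  star_mem' := by intro f hf t; simp [hf t]

lemma isClosed_E : IsClosed {f : C₀(ℝ, ℂ) | ∀ t : ℝ, f (-t) = f t} := by
  have : {f : C₀(ℝ, ℂ) | ∀ t : ℝ, f (-t) = f t} =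
      ⋂ t : ℝ, {f : C₀(ℝ, ℂ) | f (-t) = f t} := by
    ext f; simp
  rw [this]
  exact isClosed_iInter fun t => isClosed_eq (ev_cont (-t)) (ev_cont t)

lemma sqrt_atTop : Tendsto Real.sqrt atTop atTop := by
  refine tendsto_atTop_atTop_of_monotone (fun a b hab => Real.sqrt_le_sqrt hab) fun b => ?_
  refine ⟨b ^ 2, ?_⟩
  rw [Real.sqrt_sq_eq_abs]
  exact le_abs_self b

end Stmt11

end Stmt11Aux

open Stmt11 NonUnitalStarAlgebra

/-- The closed *-subalgebra of `C₀(ℝ, ℂ)` generated by the function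
`t ↦ (1 + t²)⁻¹` is exactly the subalgebra of even functions vanishing at infinity. -/
theorem closure_adjoin_inv_one_add_sq_eq_even
    (g : C₀(ℝ, ℂ)) (hg : ∀ t : ℝ, g t = (((1 + t^2)⁻¹ : ℝ) : ℂ)) :
    closure ((NonUnitalStarAlgebra.adjoin ℂ {g} :
        NonUnitalStarSubalgebra ℂ C₀(ℝ, ℂ)) : Set C₀(ℝ, ℂ)) =
      {f : C₀(ℝ, ℂ) | ∀ t : ℝ, f (-t) = f t} := by
  have hΦg : Φ (ContinuousMapZero.id S) = g := by
    ext t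
    rw [Φ_apply, hg t]
    rfl
  apply subset_antisymm
  · -- closure ⊆ evens
    refine closure_minimal ?_ isClosed_E
    have : adjoin ℂ {g} ≤ E := by
      refine adjoin_le ?_
      rintro x rfl
      intro t
      rw [hg t, hg (-t)]
      norm_num
    exact this
  · -- evens ⊆ closure
    intro f hf
    replace hf : ∀ t : ℝ, f (-t) = f t := hf
    -- build the preimage function F on S
    set F0 : ℝ → ℂ := fun x => if x = 0 then 0 else f (Real.sqrt (x⁻¹ - 1)) with hF0
    have hF00 : F0 0 = 0 := if_pos rfl
    have hcont : ContinuousOn F0 (Set.Icc 0 1) := by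
      intro x hx
      rcases eq_or_ne x 0 with rfl | hx0
      · rw [ContinuousWithinAt, hF00]
        have hsub : Set.Icc (0:ℝ) 1 ⊆ {0} ∪ Set.Ioc 0 1 := by
          intro y hy
          rcases eq_or_ne y 0 with rfl | hy0
          · exact Or.inl rfl
          · exact Or.inr ⟨lt_of_le_of_ne hy.1 (Ne.symm hy0), hy.2⟩
        refine Tendsto.mono_left ?_ (nhdsWithin_mono 0 hsub)
        rw [nhdsWithin_union, tendsto_sup]
        constructor
        · rw [nhdsWithin_singleton]
          simpa [hF00] using tendsto_pure_nhds F0 0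
        · have hinv : Tendsto (fun x : ℝ => x⁻¹) (𝓝[Set.Ioc 0 1] 0) atTop :=
            tendsto_inv_nhdsGT_zero.mono_left (nhdsWithin_mono _ fun y hy => hy.1)
          have hsub1 : Tendsto (fun x : ℝ => x⁻¹ - 1) (𝓝[Set.Ioc 0 1] 0) atTop := by
            simpa [sub_eq_add_neg] using tendsto_atTop_add_const_right _ (-1) hinv
          have key : Tendsto (fun x : ℝ => Real.sqrt (x⁻¹ - 1)) (𝓝[Set.Ioc 0 1] 0) atTop :=
            sqrt_atTop.comp hsub1
          have hcz : Tendsto f atTop (𝓝 0) := by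
            refine (zero_at_infty f).mono_left ?_
            rw [cocompact_eq_atBot_atTop]
            exact le_sup_right
          have htt : Tendsto (fun x : ℝ => f (Real.sqrt (x⁻¹ - 1)))
              (𝓝[Set.Ioc 0 1] 0) (𝓝 0) := hcz.comp key
          refine htt.congr' ?_
          filter_upwards [self_mem_nhdsWithin] with y hy
          rw [hF0]
          simp only
          rw [if_neg (ne_of_gt hy.1)]
      · refine ContinuousAt.continuousWithinAt ?_
        have hev : ∀ᶠ y in 𝓝 x, f (Real.sqrt (y⁻¹ - 1)) = F0 y := by
          filter_upwards [eventually_ne_nhds hx0] with y hy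
          rw [hF0]; simp only; rw [if_neg hy]
        refine ContinuousAt.congr ?_ hev
        exact (map_continuous f).continuousAt.comp
          (Real.continuous_sqrt.continuousAt.comp
            (((continuousAt_inv₀ hx0)).sub continuousAt_const))
    have hre : ∀ z : S, (z : ℂ).re ∈ Set.Icc (0:ℝ) 1 := by
      rintro ⟨z, x, hx, rfl⟩
      simpa using hx
    have hreS : ∀ t : ℝ, ((H t : ℂ)).re = h t := fun t => by simp [H]
    set F : C(S, ℂ)₀ :=
      ⟨⟨fun z => F0 (z : ℂ).re,
        hcont.comp_continuous (Complex.continuous_re.comp continuous_subtype_val) hre⟩,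
        by simpa [hz] using hF00⟩ with hF
    have hΦF : Φ F = f := by
      ext t
      rw [Φ_apply]
      show F0 ((H t : ℂ)).re = f t
      rw [hreS t, hF0]
      simp only
      rw [if_neg (ne_of_gt (h_pos t))]
      have : (h t)⁻¹ - 1 = t ^ 2 := by
        rw [h, inv_inv]; ring
      rw [this, Real.sqrt_sq_eq_abs]
      rcases abs_choice t with habs | habs
      · rw [habs]
      · rw [habs, hf t]
    have hFmem : F ∈ closure ((adjoin ℂ {(ContinuousMapZero.id S : C(S, ℂ)₀)} :
        NonUnitalStarSubalgebra ℂ C(S, ℂ)₀) : Set C(S, ℂ)₀) := by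
      rw [(ContinuousMapZero.adjoin_id_dense S).closure_eq]
      trivial
    have himg : Φ '' ((adjoin ℂ {(ContinuousMapZero.id S : C(S, ℂ)₀)} :
        NonUnitalStarSubalgebra ℂ C(S, ℂ)₀) : Set C(S, ℂ)₀) =
        ((adjoin ℂ {g} : NonUnitalStarSubalgebra ℂ C₀(ℝ, ℂ)) : Set C₀(ℝ, ℂ)) := by
      rw [← hΦg, ← NonUnitalStarAlgHom.map_adjoin_singleton]
      rfl
    have hsub : Φ '' closure ((adjoin ℂ {(ContinuousMapZero.id S : C(S, ℂ)₀)} :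
        NonUnitalStarSubalgebra ℂ C(S, ℂ)₀) : Set C(S, ℂ)₀) ⊆
        closure (Φ '' ((adjoin ℂ {(ContinuousMapZero.id S : C(S, ℂ)₀)} :
        NonUnitalStarSubalgebra ℂ C(S, ℂ)₀) : Set C(S, ℂ)₀)) :=
      image_closure_subset_closure_image Φ_cont
    have hmem : f ∈ closure (Φ '' ((adjoin ℂ {(ContinuousMapZero.id S : C(S, ℂ)₀)} :
        NonUnitalStarSubalgebra ℂ C(S, ℂ)₀) : Set C(S, ℂ)₀)) := hsub ⟨F, hFmem, hΦF⟩
    rwa [himg] at hmem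
end

section
/- Let H be a complex Hilbert space, D ∈ B(H) an invertible self-adjoint operator, and u ∈ B(H) a unitary such that [D, u] is compact. Then the positive spectral projections satisfy: P₊(u*Du) = u*P₊(D)u, the difference P₊(D) − u*P₊(D)u is compact, and relind(P₊(u*Du), P₊(D)) = −Index(P₊(D) u P₊(D) : Ran P₊(D) → Ran P₊(D)). -/
/-- The positive spectral projection `P₊(D) = χ_{(0,∞)}(D)` of a self-adjoint operator,
defined via the continuous functional calculus. -/
noncomputable def posProj {H : Type*} [NormedAddCommGroup H] [InnerProductSpace ℂ H]
    [CompleteSpace H] (D : H →L[ℂ] H) : H →L[ℂ] H :=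
  cfc (fun x : ℝ => Set.indicator (Set.Ioi (0:ℝ)) (fun _ => (1:ℝ)) x) D

/-! ### Auxiliary machinery -/

section Abstract

open Module

variable {E : Type*} [NormedAddCommGroup E] [InnerProductSpace ℂ E] [CompleteSpace E]

omit [CompleteSpace E] in
lemma ker_eq_orth' (T S : E →L[ℂ] E)
    (hadj : ∀ x y : E, (inner ℂ (T x) y : ℂ) = inner ℂ x (S y)) :
    LinearMap.ker S.toLinearMap = (LinearMap.range T.toLinearMap)ᗮ := by
  ext y
  simp only [LinearMap.mem_ker, Submodule.mem_orthogonal, LinearMap.mem_range,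
    ContinuousLinearMap.coe_coe]
  constructor
  · rintro hy u ⟨x, rfl⟩
    rw [hadj, hy, inner_zero_right]
  · intro hy
    have h := hy (T (S y)) ⟨S y, rfl⟩
    rw [hadj] at h
    exact inner_self_eq_zero.mp h

lemma isClosed_range_of_compact' (T S : E →L[ℂ] E)
    (h₁ : IsCompactOperator ⇑(1 - S * T)) :
    IsClosed ((LinearMap.range T.toLinearMap : Submodule ℂ E) : Set E) := by
  classical
  set N : Submodule ℂ E := LinearMap.ker T.toLinearMap with hN
  have hNclosed : IsClosed (N : Set E) := by
    have h : (N : Set E) = ⇑T ⁻¹' {0} := by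
      ext x; simp [hN, LinearMap.mem_ker]
    rw [h]; exact isClosed_singleton.preimage T.continuous
  haveI : CompleteSpace N := hNclosed.completeSpace_coe
  haveI : CompleteSpace ↥Nᗮ := N.isClosed_orthogonal.completeSpace_coe
  have hbb : ∃ c : ℝ, 0 < c ∧ ∀ x ∈ Nᗮ, c * ‖x‖ ≤ ‖T x‖ := by
    by_contra hcon
    push_neg at hcon
    choose x hx hxlt using fun n : ℕ => hcon (1 / (n + 1)) (by positivity)
    have hxne : ∀ n, ‖x n‖ ≠ 0 := by
      intro n h
      have h2 := hxlt n
      rw [h, mul_zero] at h2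
      exact (norm_nonneg _).not_gt h2
    set z : ℕ → E := fun n => (‖x n‖)⁻¹ • x n with hz
    have hzmem : ∀ n, z n ∈ Nᗮ := fun n => Nᗮ.smul_mem _ (hx n)
    have hznorm : ∀ n, ‖z n‖ = 1 := by
      intro n
      rw [hz]
      simp only [norm_smul, norm_inv, norm_norm]
      exact inv_mul_cancel₀ (hxne n)
    have hTz : Filter.Tendsto (fun n => T (z n)) Filter.atTop (nhds 0) := by
      refine squeeze_zero_norm (fun n => ?_) tendsto_one_div_add_atTop_nhds_zero_nat
      have h3 : ‖T (z n)‖ = ‖x n‖⁻¹ * ‖T (x n)‖ := by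
        rw [hz]; simp [norm_smul]
      rw [h3]
      calc ‖x n‖⁻¹ * ‖T (x n)‖ ≤ ‖x n‖⁻¹ * (1 / (n + 1) * ‖x n‖) := by
            gcongr
            exact (hxlt n).le
        _ = 1 / (n + 1) := by
            rw [mul_comm (1 / ((n : ℝ) + 1)) ‖x n‖, ← mul_assoc,
              inv_mul_cancel₀ (hxne n), one_mul]
    have hball : ∀ n, (1 - S * T) (z n) ∈
        closure (⇑(1 - S * T) '' Metric.closedBall 0 1) := by
      intro n
      exact subset_closure ⟨z n, by
        simp [Metric.mem_closedBall, dist_zero_right, (hznorm n).le], rfl⟩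
    obtain ⟨w, -, φ, hφ, hconv⟩ :=
      (h₁.isCompact_closure_image_closedBall 1).tendsto_subseq hball
    have hφtend : Filter.Tendsto φ Filter.atTop Filter.atTop := hφ.tendsto_atTop
    have hzconv : Filter.Tendsto (fun n => z (φ n)) Filter.atTop (nhds w) := by
      have hrepr : ∀ n, z (φ n) = S (T (z (φ n))) + (1 - S * T) (z (φ n)) := by
        intro n
        simp [ContinuousLinearMap.sub_apply, ContinuousLinearMap.mul_apply]
      have t1 : Filter.Tendsto (fun n => S (T (z (φ n)))) Filter.atTop (nhds 0) := by
        have h4 := (S.continuous.tendsto 0).comp (hTz.comp hφtend)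
        simpa [Function.comp_def] using h4
      have h5 := t1.add hconv
      rw [zero_add] at h5
      exact h5.congr (fun n => (hrepr n).symm)
    have hwmem : w ∈ Nᗮ :=
      N.isClosed_orthogonal.mem_of_tendsto hzconv
        (Filter.Eventually.of_forall fun n => hzmem _)
    have hwnorm : ‖w‖ = 1 := by
      have t2 : Filter.Tendsto (fun n => ‖z (φ n)‖) Filter.atTop (nhds ‖w‖) :=
        (continuous_norm.tendsto w).comp hzconv
      have t3 : Filter.Tendsto (fun n : ℕ => (1 : ℝ)) Filter.atTop (nhds 1) :=
        tendsto_const_nhds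
      exact tendsto_nhds_unique (t2.congr (fun n => (hznorm (φ n)))) t3
    have hTw : T w = 0 :=
      tendsto_nhds_unique ((T.continuous.tendsto w).comp hzconv) (hTz.comp hφtend)
    have hwN : w ∈ N := by
      rw [hN]; exact LinearMap.mem_ker.mpr hTw
    have hw0 : w = 0 := by
      have := (Submodule.mem_orthogonal _ _).mp hwmem w hwN
      exact inner_self_eq_zero.mp this
    rw [hw0, norm_zero] at hwnorm
    exact zero_ne_one hwnorm
  obtain ⟨c, hc, hcb⟩ := hbb
  set T' : ↥Nᗮ →L[ℂ] E := T.comp Nᗮ.subtypeL with hT'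
  have hanti : AntilipschitzWith (⟨c, hc.le⟩ : NNReal)⁻¹ ⇑T' := by
    apply T'.antilipschitz_of_bound
    intro x
    have h6 := hcb x x.2
    show ‖x‖ ≤ (c⁻¹ : ℝ) * ‖T' x‖
    exact (le_inv_mul_iff₀ hc).mpr (by simpa [hT'] using h6)
  have hclosed' : IsClosed (Set.range ⇑T') :=
    hanti.isClosed_range T'.uniformContinuous
  have hEq : ((LinearMap.range T.toLinearMap : Submodule ℂ E) : Set E) = Set.range ⇑T' := by
    ext y
    simp only [SetLike.mem_coe, LinearMap.mem_range, ContinuousLinearMap.coe_coe,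
      Set.mem_range]
    constructor
    · rintro ⟨x, rfl⟩
      have hx : x ∈ N ⊔ Nᗮ := by
        rw [Submodule.sup_orthogonal_of_hasOrthogonalProjection]; trivial
      obtain ⟨a, ha, b, hb, rfl⟩ := Submodule.mem_sup.mp hx
      refine ⟨⟨b, hb⟩, ?_⟩
      have haz : T a = 0 := LinearMap.mem_ker.mp ha
      simp [hT', map_add, haz]
    · rintro ⟨x, rfl⟩
      exact ⟨x, rfl⟩
  rw [hEq]
  exact hclosed'

lemma key_index' (T S : E →L[ℂ] E)
    (hadj : ∀ x y : E, (inner ℂ (T x) y : ℂ) = inner ℂ x (S y))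
    (h₁ : IsCompactOperator ⇑(1 - S * T)) (h₂ : IsCompactOperator ⇑(1 - T * S)) :
    fredIndex S.toLinearMap = - fredIndex T.toLinearMap := by
  have hadj' : ∀ x y : E, (inner ℂ (S x) y : ℂ) = inner ℂ x (T y) := by
    intro x y
    have h := hadj y x
    calc (inner ℂ (S x) y : ℂ) = starRingEnd ℂ (inner ℂ y (S x)) := (inner_conj_symm _ _).symm
      _ = starRingEnd ℂ (inner ℂ (T y) x) := by rw [h]
      _ = inner ℂ x (T y) := inner_conj_symm _ _
  have hkerS := ker_eq_orth' T S hadj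
  have hkerT := ker_eq_orth' S T hadj'
  have hclT := isClosed_range_of_compact' T S h₁
  have hclS := isClosed_range_of_compact' S T h₂
  haveI : CompleteSpace ↥(LinearMap.range T.toLinearMap) := hclT.completeSpace_coe
  haveI : CompleteSpace ↥(LinearMap.range S.toLinearMap) := hclS.completeSpace_coe
  have ecT := Submodule.quotientEquivOfIsCompl _ _
    (Submodule.isCompl_orthogonal_of_hasOrthogonalProjection (K := LinearMap.range T.toLinearMap))
  have ecS := Submodule.quotientEquivOfIsCompl _ _
    (Submodule.isCompl_orthogonal_of_hasOrthogonalProjection (K := LinearMap.range S.toLinearMap))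
  have h7 : finrank ℂ (E ⧸ LinearMap.range T.toLinearMap) =
      finrank ℂ (LinearMap.ker S.toLinearMap) := by
    rw [hkerS]; exact ecT.finrank_eq
  have h8 : finrank ℂ (E ⧸ LinearMap.range S.toLinearMap) =
      finrank ℂ (LinearMap.ker T.toLinearMap) := by
    rw [hkerT]; exact ecS.finrank_eq
  unfold fredIndex
  rw [h7, h8]
  ring

end Abstract

section CFCAux

open Module Polynomial

variable {H : Type*} [NormedAddCommGroup H] [InnerProductSpace ℂ H] [CompleteSpace H]

omit [CompleteSpace H] in
lemma coe_mul_clm' (a b : H →L[ℂ] H) : ⇑(a * b) = ⇑a ∘ ⇑b := rfl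

omit [CompleteSpace H] in
lemma commCompact_mul' {u a b : H →L[ℂ] H}
    (ha : IsCompactOperator ⇑(a * u - u * a)) (hb : IsCompactOperator ⇑(b * u - u * b)) :
    IsCompactOperator ⇑(a * b * u - u * (a * b)) := by
  have h : a * b * u - u * (a * b) = a * (b * u - u * b) + (a * u - u * a) * b := by
    noncomm_ring
  rw [h]
  have h1 : IsCompactOperator ⇑(a * (b * u - u * b)) := by
    rw [coe_mul_clm']; exact hb.clm_comp a
  have h2 : IsCompactOperator ⇑((a * u - u * a) * b) := by
    rw [coe_mul_clm']; exact ha.comp_clm b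
  exact h1.add h2

lemma commCompact_aeval' (u D : H →L[ℂ] H)
    (hD : IsCompactOperator ⇑(D * u - u * D)) (p : ℝ[X]) :
    IsCompactOperator ⇑((Polynomial.aeval D p) * u - u * (Polynomial.aeval D p)) := by
  induction p using Polynomial.induction_on with
  | C r =>
    have h : (Polynomial.aeval D (C r)) * u - u * (Polynomial.aeval D (C r)) = 0 := by
      rw [Polynomial.aeval_C, Algebra.commutes, sub_self]
    rw [h, ContinuousLinearMap.coe_zero']
    exact isCompactOperator_zero
  | add p q hp hq =>
    have h : (Polynomial.aeval D (p + q)) * u - u * (Polynomial.aeval D (p + q)) =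
        ((Polynomial.aeval D p) * u - u * (Polynomial.aeval D p)) +
        ((Polynomial.aeval D q) * u - u * (Polynomial.aeval D q)) := by
      rw [map_add]; noncomm_ring
    rw [h]
    exact hp.add hq
  | monomial n r ih =>
    have h : (C r * X ^ (n + 1) : ℝ[X]) = (C r * X ^ n) * X := by ring
    rw [h, map_mul]
    have hX : Polynomial.aeval D (X : ℝ[X]) = D := Polynomial.aeval_X D
    rw [hX]
    exact commCompact_mul' ih hD

lemma commCompact_cfc' (u D : H →L[ℂ] H) (hD : IsSelfAdjoint D)
    (h : IsCompactOperator ⇑(D * u - u * D)) (g : ℝ → ℝ) (hg : Continuous g) :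
    IsCompactOperator ⇑(cfc g D * u - u * cfc g D) := by
  set M : ℝ := ‖D‖ * ‖(1 : H →L[ℂ] H)‖ with hM
  have hspec : spectrum ℝ D ⊆ Set.Icc (-M) M := by
    intro x hx
    have h1 : ‖x‖ ≤ M := spectrum.norm_le_norm_mul_of_mem hx
    rw [Real.norm_eq_abs] at h1
    exact abs_le.mp h1
  have hgc : ContinuousOn g (Set.Icc (-M) M) := hg.continuousOn
  have hsel : ∀ n : ℕ, ∃ p : ℝ[X], ∀ x ∈ Set.Icc (-M) M,
      |p.eval x - g x| < 1 / (n + 1) :=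
    fun n => exists_polynomial_near_of_continuousOn (-M) M g hgc _ (by positivity)
  choose p hp using hsel
  have hnorm : ∀ n : ℕ, ‖cfc g D - Polynomial.aeval D (p n)‖ ≤ 1 / (n + 1) := by
    intro n
    rw [← cfc_polynomial (p n) D, ← cfc_sub g (fun x => (p n).eval x) D]
    apply norm_cfc_le (by positivity)
    intro x hx
    have h2 := hp n x (hspec hx)
    rw [Real.norm_eq_abs, abs_sub_comm]
    exact h2.le
  have htend : Filter.Tendsto (fun n => Polynomial.aeval D (p n)) Filter.atTop
      (nhds (cfc g D)) := by
    rw [← tendsto_sub_nhds_zero_iff]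
    refine squeeze_zero_norm (fun n => ?_) tendsto_one_div_add_atTop_nhds_zero_nat
    rw [norm_sub_rev]
    exact hnorm n
  have hcont : Continuous fun a : H →L[ℂ] H => a * u - u * a :=
    ((continuous_id.mul continuous_const).sub (continuous_const.mul continuous_id))
  have htend2 : Filter.Tendsto (fun n => (Polynomial.aeval D (p n)) * u -
      u * (Polynomial.aeval D (p n))) Filter.atTop (nhds (cfc g D * u - u * cfc g D)) :=
    (hcont.tendsto _).comp htend
  exact isCompactOperator_of_tendsto htend2
    (Filter.Eventually.of_forall fun n => commCompact_aeval' u D h (p n))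

/-- Conjugation `x ↦ u* x u` by a unitary is a ⋆-algebra homomorphism. -/
noncomputable def conjSAH (u : H →L[ℂ] H) (hu₁ : star u * u = 1) (hu₂ : u * star u = 1) :
    (H →L[ℂ] H) →⋆ₐ[ℂ] (H →L[ℂ] H) where
  toFun x := star u * x * u
  map_one' := by show star u * 1 * u = 1; rw [mul_one, hu₁]
  map_mul' x y := by
    calc star u * (x * y) * u = star u * x * (u * star u) * y * u := by
          rw [hu₂]; noncomm_ring
      _ = star u * x * u * (star u * y * u) := by noncomm_ring
  map_zero' := by simp
  map_add' x y := by noncomm_ring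
  commutes' c := by
    simp only [Algebra.algebraMap_eq_smul_one]
    rw [mul_smul_comm, smul_mul_assoc, mul_one, hu₁]
  map_star' x := by
    simp only [star_mul, star_star]
    noncomm_ring

lemma conjSAH_continuous (u : H →L[ℂ] H) (hu₁ : star u * u = 1) (hu₂ : u * star u = 1) :
    Continuous (conjSAH u hu₁ hu₂) :=
  (continuous_const.mul continuous_id).mul continuous_const

lemma indicator_continuousOn (D : H →L[ℂ] H) (hDinv : IsUnit D) :
    ContinuousOn (fun x : ℝ => Set.indicator (Set.Ioi (0:ℝ)) (fun _ => (1:ℝ)) x)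
      (spectrum ℝ D) := by
  have h0 : (0 : ℝ) ∉ spectrum ℝ D := spectrum.zero_notMem ℝ hDinv
  intro x hx
  apply ContinuousAt.continuousWithinAt
  have hxne : x ≠ 0 := fun hc => h0 (hc ▸ hx)
  rcases lt_or_gt_of_ne hxne with hlt | hgt
  · have hev : ∀ᶠ y in nhds x, Set.indicator (Set.Ioi (0:ℝ)) (fun _ => (1:ℝ)) y = 0 := by
      filter_upwards [eventually_lt_nhds hlt] with y hy
      exact Set.indicator_of_notMem (by simpa using hy.le) _
    exact continuousAt_const.congr (hev.mono fun y hy => hy.symm)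
  · have hev : ∀ᶠ y in nhds x, Set.indicator (Set.Ioi (0:ℝ)) (fun _ => (1:ℝ)) y = 1 := by
      filter_upwards [eventually_gt_nhds hgt] with y hy
      exact Set.indicator_of_mem (by simpa using hy) _
    exact continuousAt_const.congr (hev.mono fun y hy => hy.symm)

lemma posProj_conj' (D u : H →L[ℂ] H) (hD : IsSelfAdjoint D) (hDinv : IsUnit D)
    (hu₁ : star u * u = 1) (hu₂ : u * star u = 1) :
    posProj (star u * D * u) = star u * posProj D * u := by
  have hsa' : IsSelfAdjoint (star u * D * u) := by
    rw [IsSelfAdjoint, star_mul, star_mul, star_star, hD.star_eq, mul_assoc]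
  have h := StarAlgHomClass.map_cfc (R := ℝ) (conjSAH u hu₁ hu₂)
    (fun x : ℝ => Set.indicator (Set.Ioi (0:ℝ)) (fun _ => (1:ℝ)) x) D
    (indicator_continuousOn D hDinv) (conjSAH_continuous u hu₁ hu₂) hD hsa'
  exact h.symm

/-- A globally continuous function agreeing with the positive indicator on the spectrum. -/
lemma exists_clamp (D : H →L[ℂ] H) (hDinv : IsUnit D) :
    ∃ g : ℝ → ℝ, Continuous g ∧
      Set.EqOn (fun x : ℝ => Set.indicator (Set.Ioi (0:ℝ)) (fun _ => (1:ℝ)) x) g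
        (spectrum ℝ D) ∧ (∀ x, g x = 0 ∨ g x = 1 ∨ (0 ≤ g x ∧ g x ≤ 1)) := by
  have h0 : (0 : ℝ) ∉ spectrum ℝ D := spectrum.zero_notMem ℝ hDinv
  have hopen : IsOpen (spectrum ℝ D)ᶜ := (spectrum.isClosed D).isOpen_compl
  obtain ⟨ε, hε, hball⟩ := Metric.isOpen_iff.mp hopen 0 h0
  refine ⟨fun x => min 1 (max 0 (ε⁻¹ * x)), ?_, ?_, ?_⟩
  · exact continuous_const.min (continuous_const.max (continuous_const.mul continuous_id))
  · intro x hx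
    by_cases hxpos : 0 < x
    · have hxe : ε ≤ x := by
        by_contra hlt
        push_neg at hlt
        have : x ∈ Metric.ball (0:ℝ) ε := by
          rw [Metric.mem_ball, Real.dist_eq, sub_zero, abs_of_pos hxpos]
          exact hlt
        exact hball this hx
      have h1 : (1:ℝ) ≤ ε⁻¹ * x := by
        rw [one_le_inv_mul₀ hε]
        exact hxe
      have h2 : (0:ℝ) ≤ ε⁻¹ * x := by positivity
      simp only [Set.indicator_of_mem (Set.mem_Ioi.mpr hxpos)]
      rw [max_eq_right h2, min_eq_left h1]
    · push_neg at hxpos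
      have h1 : ε⁻¹ * x ≤ 0 := mul_nonpos_of_nonneg_of_nonpos (by positivity) hxpos
      simp only [Set.indicator_of_notMem (by simpa using not_lt.mpr hxpos : x ∉ Set.Ioi (0:ℝ))]
      rw [max_eq_left h1, min_eq_right zero_le_one]
  · intro x
    right; right
    constructor
    · exact le_min (by norm_num) (le_max_left _ _) |>.trans (le_refl _) |>.trans (le_refl _)
      |>.trans (le_refl _)
    · exact min_le_left _ _

end CFCAux

section Bridge

open Module

variable {H : Type*} [NormedAddCommGroup H] [InnerProductSpace ℂ H] [CompleteSpace H]

/-- The continuous version of `compressEndo`. -/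
noncomputable def cEndo (P V : H →L[ℂ] H) :
    ↥(LinearMap.range (P : H →ₗ[ℂ] H)) →L[ℂ] ↥(LinearMap.range (P : H →ₗ[ℂ] H)) :=
  ContinuousLinearMap.codRestrict ((P.comp V).comp (LinearMap.range (P : H →ₗ[ℂ] H)).subtypeL)
    (LinearMap.range (P : H →ₗ[ℂ] H)) (fun x => LinearMap.mem_range.mpr ⟨V x, rfl⟩)

omit [CompleteSpace H] in
lemma cEndo_toLinearMap (P V : H →L[ℂ] H) :
    (cEndo P V).toLinearMap = compressEndo P V := by
  ext x
  rfl

omit [CompleteSpace H] in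
lemma fredIndex_comp_equiv {E₁ E₂ F : Type*} [AddCommGroup E₁] [AddCommGroup E₂]
    [AddCommGroup F] [Module ℂ E₁] [Module ℂ E₂] [Module ℂ F]
    (T : E₂ →ₗ[ℂ] F) (e : E₁ ≃ₗ[ℂ] E₂) :
    fredIndex (T ∘ₗ (e : E₁ →ₗ[ℂ] E₂)) = fredIndex T := by
  unfold fredIndex
  have hker : LinearMap.ker (T ∘ₗ (e : E₁ →ₗ[ℂ] E₂)) =
      (LinearMap.ker T).comap (e : E₁ →ₗ[ℂ] E₂) := LinearMap.ker_comp _ _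
  have hrange : LinearMap.range (T ∘ₗ (e : E₁ →ₗ[ℂ] E₂)) = LinearMap.range T := by
    rw [LinearMap.range_comp, LinearEquiv.range, Submodule.map_top]
  rw [hker, hrange]
  congr 2
  exact (LinearEquiv.ofSubmodule' e (LinearMap.ker T)).finrank_eq

end Bridge
/-- If `D` is an invertible bounded self-adjoint operator and `u` a unitary
with `[D, u]` compact, then `P₊(u*Du) = u*P₊(D)u`, the difference `P₊(D) − u*P₊(D)u` is
compact, and `relind(P₊(u*Du), P₊(D)) = −Index(P₊(D) u P₊(D) : Ran P₊(D) → Ran P₊(D))`. -/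
theorem relind_posProj_conjugation
    {H : Type*} [NormedAddCommGroup H] [InnerProductSpace ℂ H] [CompleteSpace H]
    (D u : H →L[ℂ] H) (hD : IsSelfAdjoint D) (hDinv : IsUnit D)
    (hu₁ : star u * u = 1) (hu₂ : u * star u = 1)
    (hcomm : IsCompactOperator ⇑(D * u - u * D)) :
    posProj (star u * D * u) = star u * posProj D * u ∧
    IsCompactOperator ⇑(posProj D - star u * posProj D * u) ∧
    relind (posProj (star u * D * u)) (posProj D) =
      - fredIndex (compressEndo (posProj D) u) := by
  classical
  obtain ⟨g, hgcont, hgeq, -⟩ := exists_clamp D hDinv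
  set P : H →L[ℂ] H := posProj D with hPdef
  -- Part A
  have hA : posProj (star u * D * u) = star u * P * u := by
    rw [hPdef]; exact posProj_conj' D u hD hDinv hu₁ hu₂
  have hPg : P = cfc g D := by rw [hPdef]; exact cfc_congr hgeq
  -- [P, u] compact
  have hK : IsCompactOperator ⇑(P * u - u * P) := by
    rw [hPg]
    exact commCompact_cfc' u D hD hcomm g hgcont
  have heq1 : star u * (P * u - u * P) = star u * P * u - P := by
    rw [mul_sub, ← mul_assoc, ← mul_assoc, hu₁, one_mul]
  have heq2 : (star u * P * u - P) * star u = star u * P - P * star u := by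
    rw [sub_mul, mul_assoc (star u * P) u (star u), hu₂, mul_one]
  have hk1 : IsCompactOperator ⇑(star u * (P * u - u * P)) := by
    rw [coe_mul_clm']; exact hK.clm_comp (star u)
  have hC₁ : IsCompactOperator ⇑(P - star u * P * u) := by
    have h : P - star u * P * u = -(star u * (P * u - u * P)) := by
      rw [heq1, neg_sub]
    rw [h]
    exact hk1.neg
  have hk2 : IsCompactOperator ⇑((star u * (P * u - u * P)) * star u) := by
    rw [coe_mul_clm']; exact hk1.comp_clm (star u)
  have hC₂ : IsCompactOperator ⇑(P - u * P * star u) := by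
    have h : P - u * P * star u = u * ((star u * (P * u - u * P)) * star u) := by
      rw [heq1, heq2, mul_sub, ← mul_assoc, ← mul_assoc, hu₂, one_mul]
    rw [h, coe_mul_clm']
    exact hk2.clm_comp u
  -- Part B
  have hB : IsCompactOperator ⇑(P - star u * P * u) := hC₁
  -- the projection facts
  have hP2 : P * P = P := by
    rw [hPg, ← cfc_mul g g D hgcont.continuousOn hgcont.continuousOn]
    refine cfc_congr fun x hx => ?_
    have h := hgeq hx
    show g x * g x = g x
    rw [← h]
    by_cases hm : x ∈ Set.Ioi (0:ℝ)
    · simp [Set.indicator_of_mem hm]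
    · simp [Set.indicator_of_notMem hm]
  have hPsa : IsSelfAdjoint P := by
    rw [hPdef]
    exact cfc_predicate _ D
  have hPfix : ∀ z ∈ LinearMap.range (P : H →ₗ[ℂ] H), P z = z := by
    rintro z ⟨y, rfl⟩
    calc P (P y) = (P * P) y := rfl
      _ = P y := by rw [hP2]
  have hEclosed : IsClosed ((LinearMap.range (P : H →ₗ[ℂ] H) : Submodule ℂ H) : Set H) := by
    have h : ((LinearMap.range (P : H →ₗ[ℂ] H) : Submodule ℂ H) : Set H) = ⇑(P - 1) ⁻¹' {0} := by
      ext z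
      simp only [SetLike.mem_coe, LinearMap.mem_range, Set.mem_preimage,
        Set.mem_singleton_iff, ContinuousLinearMap.sub_apply, ContinuousLinearMap.one_apply,
        sub_eq_zero]
      constructor
      · rintro ⟨y, rfl⟩
        calc P (P y) = (P * P) y := rfl
          _ = P y := by rw [hP2]
      · intro hz
        exact ⟨z, hz⟩
    rw [h]
    exact isClosed_singleton.preimage (P - 1).continuous
  haveI : CompleteSpace ↥(LinearMap.range (P : H →ₗ[ℂ] H)) := hEclosed.completeSpace_coe
  -- the compressions as continuous maps
  have hPadj : ContinuousLinearMap.adjoint P = P := by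
    rw [← ContinuousLinearMap.star_eq_adjoint, hPsa.star_eq]
  have hPinner : ∀ a b : H, (inner ℂ (P a) b : ℂ) = inner ℂ a (P b) := by
    intro a b
    conv_lhs => rw [← hPadj]
    rw [ContinuousLinearMap.adjoint_inner_left]
  have huinner : ∀ a b : H, (inner ℂ (u a) b : ℂ) = inner ℂ a ((star u) b) := by
    intro a b
    rw [ContinuousLinearMap.star_eq_adjoint]
    exact (ContinuousLinearMap.adjoint_inner_right u a b).symm
  have hadj : ∀ x y : ↥(LinearMap.range (P : H →ₗ[ℂ] H)),
      (inner ℂ ((cEndo P u) x) y : ℂ) = inner ℂ x ((cEndo P (star u)) y) := by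
    intro x y
    rw [Submodule.coe_inner, Submodule.coe_inner]
    show (inner ℂ (P (u ↑x)) (↑y : H) : ℂ) = inner ℂ (↑x : H) (P ((star u) ↑y))
    calc (inner ℂ (P (u ↑x)) (↑y : H) : ℂ) = inner ℂ (u ↑x) (P ↑y) := hPinner _ _
      _ = inner ℂ (u ↑x) (↑y : H) := by rw [hPfix _ y.2]
      _ = inner ℂ (↑x : H) ((star u) ↑y) := huinner _ _
      _ = inner ℂ (P ↑x) ((star u) ↑y) := by rw [hPfix _ x.2]
      _ = inner ℂ (↑x : H) (P ((star u) ↑y)) := hPinner _ _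
  -- compactness of 1 - (compressions)
  have hcompact_one_sub : ∀ V W : H →L[ℂ] H, IsCompactOperator ⇑(P - V * P * W) →
      IsCompactOperator
        ⇑((1 : ↥(LinearMap.range (P : H →ₗ[ℂ] H)) →L[ℂ] ↥(LinearMap.range (P : H →ₗ[ℂ] H))) - cEndo P V * cEndo P W) := by
    intro V W hVW
    set A : H →L[ℂ] H := P * ((P - V * P * W) * P) with hAdef
    have hAcpt : IsCompactOperator ⇑A := by
      have h1 : IsCompactOperator ⇑((P - V * P * W) * P) := by
        rw [coe_mul_clm']; exact hVW.comp_clm P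
      rw [hAdef, coe_mul_clm']
      exact h1.clm_comp P
    have hmem : ∀ x : ↥(LinearMap.range (P : H →ₗ[ℂ] H)),
        (⇑A ∘ ⇑(LinearMap.range (P : H →ₗ[ℂ] H)).subtypeL) x ∈ LinearMap.range (P : H →ₗ[ℂ] H) := by
      intro x
      exact LinearMap.mem_range.mpr ⟨((P - V * P * W) * P) ↑x, rfl⟩
    have hval : ∀ x : ↥(LinearMap.range (P : H →ₗ[ℂ] H)), A ↑x = ↑x - P (V (P (W ↑x))) := by
      intro x
      have hz : P (↑x : H) = ↑x := hPfix _ x.2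
      have h2 : A ↑x = P (P (P ↑x)) - P (V (P (W (P ↑x)))) := by
        simp [hAdef, ContinuousLinearMap.mul_apply, ContinuousLinearMap.sub_apply, map_sub]
      simp only [hz] at h2
      exact h2
    have hfun : ⇑((1 : ↥(LinearMap.range (P : H →ₗ[ℂ] H)) →L[ℂ] ↥(LinearMap.range (P : H →ₗ[ℂ] H))) -
        cEndo P V * cEndo P W)
        = Set.codRestrict (⇑A ∘ ⇑(LinearMap.range (P : H →ₗ[ℂ] H)).subtypeL) (LinearMap.range (P : H →ₗ[ℂ] H)) hmem := by
      funext x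
      apply Subtype.ext
      have hL : (((1 : ↥(LinearMap.range (P : H →ₗ[ℂ] H)) →L[ℂ] ↥(LinearMap.range (P : H →ₗ[ℂ] H))) -
          cEndo P V * cEndo P W) x : H) = ↑x - P (V (P (W ↑x))) := by
        simp only [ContinuousLinearMap.sub_apply, ContinuousLinearMap.one_apply,
          ContinuousLinearMap.mul_apply, AddSubgroupClass.coe_sub]
        rfl
      rw [hL]
      exact (hval x).symm
    rw [hfun]
    exact (hAcpt.comp_clm (LinearMap.range (P : H →ₗ[ℂ] H)).subtypeL).codRestrict hmem hEclosed
  have h₁ : IsCompactOperator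
      ⇑((1 : ↥(LinearMap.range (P : H →ₗ[ℂ] H)) →L[ℂ] ↥(LinearMap.range (P : H →ₗ[ℂ] H))) -
        cEndo P (star u) * cEndo P u) := hcompact_one_sub (star u) u hC₁
  have h₂ : IsCompactOperator
      ⇑((1 : ↥(LinearMap.range (P : H →ₗ[ℂ] H)) →L[ℂ] ↥(LinearMap.range (P : H →ₗ[ℂ] H))) -
        cEndo P u * cEndo P (star u)) := hcompact_one_sub u (star u) hC₂
  have hkey : fredIndex (cEndo P (star u)).toLinearMap
      = - fredIndex (cEndo P u).toLinearMap :=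
    key_index' (cEndo P u) (cEndo P (star u)) hadj h₁ h₂
  rw [cEndo_toLinearMap, cEndo_toLinearMap] at hkey
  -- the unitary equivalence between the ranges of P and u* P u
  set P' : H →L[ℂ] H := star u * P * u with hP'def
  have huustar : ∀ z : H, u ((star u) z) = z := by
    intro z
    have h := congrArg (fun T : H →L[ℂ] H => T z) hu₂
    simpa [ContinuousLinearMap.mul_apply] using h
  have hustaru : ∀ z : H, (star u) (u z) = z := by
    intro z
    have h := congrArg (fun T : H →L[ℂ] H => T z) hu₁
    simpa [ContinuousLinearMap.mul_apply] using h
  have hmem₁ : ∀ c : H, c ∈ LinearMap.range (P : H →ₗ[ℂ] H) → (star u) c ∈ LinearMap.range (P' : H →ₗ[ℂ] H) := by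
    intro c hc
    refine LinearMap.mem_range.mpr ⟨(star u) c, ?_⟩
    show (star u) (P (u ((star u) c))) = (star u) c
    rw [huustar, hPfix _ hc]
  have hmem₂ : ∀ c : H, c ∈ LinearMap.range (P' : H →ₗ[ℂ] H) → u c ∈ LinearMap.range (P : H →ₗ[ℂ] H) := by
    rintro c ⟨w, hw⟩
    refine LinearMap.mem_range.mpr ⟨u c, ?_⟩
    have h : u c = P (u w) := by
      rw [← hw]
      show u ((star u) (P (u w))) = P (u w)
      exact huustar _
    rw [h]
    calc P (P (u w)) = (P * P) (u w) := rfl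
      _ = P (u w) := by rw [hP2]
  let e : ↥(LinearMap.range (P : H →ₗ[ℂ] H)) ≃ₗ[ℂ] ↥(LinearMap.range (P' : H →ₗ[ℂ] H)) :=
    LinearEquiv.ofLinear
      (LinearMap.codRestrict (LinearMap.range (P' : H →ₗ[ℂ] H))
        (((star u).toLinearMap).comp (LinearMap.range (P : H →ₗ[ℂ] H)).subtype)
        (fun c => hmem₁ ↑c c.2))
      (LinearMap.codRestrict (LinearMap.range (P : H →ₗ[ℂ] H))
        ((u.toLinearMap).comp (LinearMap.range (P' : H →ₗ[ℂ] H)).subtype)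
        (fun c => hmem₂ ↑c c.2))
      (LinearMap.ext fun y => Subtype.ext (hustaru ↑y))
      (LinearMap.ext fun x => Subtype.ext (huustar ↑x))
  have hcomp : (compress P' P) ∘ₗ (e : ↥(LinearMap.range (P : H →ₗ[ℂ] H)) →ₗ[ℂ] ↥(LinearMap.range (P' : H →ₗ[ℂ] H)))
      = compressEndo P (star u) := by
    refine LinearMap.ext fun x => Subtype.ext ?_
    show (P ((e x : ↥(LinearMap.range (P' : H →ₗ[ℂ] H))) : H) : H) = P ((star u) ↑x)
    congr 1
  refine ⟨hA, hB, ?_⟩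
  rw [hA]
  show fredIndex (compress P' P) = - fredIndex (compressEndo P u)
  rw [← fredIndex_comp_equiv (compress P' P) e, hcomp, hkey]
end
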